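/- Let F : met → met be the operator F(d)(sᵢ, sⱼ) = (1-c)|r(sᵢ) - r(sⱼ)| + c · W₁(d)(P(sᵢ), P(sⱼ)) on the space of bounded pseudometrics on a finite set S, where W₁(d) is the 1-Wasserstein distance with ground metric d. Then F is a c-contraction in the sup norm on pseudometrics, for any c ∈ [0,1). -/
import Mathlib


open Finset
noncomputable section

/-- The 1-Wasserstein distance between two distributions `μ ν` on a finite set `S`
with ground cost `d`, as the infimum over couplings of the expected cost. -/
def W1 {S : Type*} [Fintype S] (d : S → S → ℝ) (μ ν : S → ℝ) : ℝ :=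
  sInf {v : ℝ | ∃ c : S → S → ℝ, (∀ x y, 0 ≤ c x y) ∧
    (∀ x, ∑ y, c x y = μ x) ∧ (∀ y, ∑ x, c x y = ν y) ∧
    v = ∑ x, ∑ y, d x y * c x y}

lemma W1_le_W1_add {S : Type*} [Fintype S] (d₁ d₂ : S → S → ℝ) (μ ν : S → ℝ)
    (hμ0 : ∀ x, 0 ≤ μ x) (hμ1 : ∑ x, μ x = 1)
    (hν0 : ∀ x, 0 ≤ ν x) (hν1 : ∑ x, ν x = 1)
    (hd₁0 : ∀ x y, 0 ≤ d₁ x y)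
    (K : ℝ) (hK : ∀ x y, d₁ x y - d₂ x y ≤ K) :
    W1 d₁ μ ν ≤ W1 d₂ μ ν + K := by
  have hbdd : BddBelow {v : ℝ | ∃ c : S → S → ℝ, (∀ x y, 0 ≤ c x y) ∧
      (∀ x, ∑ y, c x y = μ x) ∧ (∀ y, ∑ x, c x y = ν y) ∧
      v = ∑ x, ∑ y, d₁ x y * c x y} := by
    refine ⟨0, fun v hv => ?_⟩
    obtain ⟨γ, hγ0, -, -, rfl⟩ := hv
    exact Finset.sum_nonneg fun x _ => Finset.sum_nonneg fun y _ =>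
      mul_nonneg (hd₁0 x y) (hγ0 x y)
  have hne₂ : {v : ℝ | ∃ c : S → S → ℝ, (∀ x y, 0 ≤ c x y) ∧
      (∀ x, ∑ y, c x y = μ x) ∧ (∀ y, ∑ x, c x y = ν y) ∧
      v = ∑ x, ∑ y, d₂ x y * c x y}.Nonempty := by
    refine ⟨_, fun x y => μ x * ν y, fun x y => mul_nonneg (hμ0 x) (hν0 y),
      fun x => ?_, fun y => ?_, rfl⟩
    · rw [← Finset.mul_sum, hν1, mul_one]
    · rw [← Finset.sum_mul, hμ1, one_mul]
  have key : ∀ v ∈ {v : ℝ | ∃ c : S → S → ℝ, (∀ x y, 0 ≤ c x y) ∧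
      (∀ x, ∑ y, c x y = μ x) ∧ (∀ y, ∑ x, c x y = ν y) ∧
      v = ∑ x, ∑ y, d₂ x y * c x y}, W1 d₁ μ ν - K ≤ v := by
    rintro v ⟨γ, hγ0, hγr, hγc, rfl⟩
    have h1 : W1 d₁ μ ν ≤ ∑ x, ∑ y, d₁ x y * γ x y :=
      csInf_le hbdd ⟨γ, hγ0, hγr, hγc, rfl⟩
    have h2 : ∑ x, ∑ y, d₁ x y * γ x y ≤ (∑ x, ∑ y, d₂ x y * γ x y) + K := by
      have hsum : ∑ x, ∑ y, γ x y = 1 := by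
        rw [← hμ1]; exact Finset.sum_congr rfl fun x _ => hγr x
      calc ∑ x, ∑ y, d₁ x y * γ x y
          ≤ ∑ x, ∑ y, (d₂ x y * γ x y + K * γ x y) := by
            refine Finset.sum_le_sum fun x _ => Finset.sum_le_sum fun y _ => ?_
            have := hK x y
            nlinarith [hγ0 x y]
        _ = (∑ x, ∑ y, d₂ x y * γ x y) + K * ∑ x, ∑ y, γ x y := by
            simp [Finset.sum_add_distrib, Finset.mul_sum]
        _ = (∑ x, ∑ y, d₂ x y * γ x y) + K := by rw [hsum, mul_one]
    linarith
  have := le_csInf hne₂ key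
  change W1 d₁ μ ν - K ≤ W1 d₂ μ ν at this
  linarith

theorem bisim_operator_contraction {S : Type*} [Fintype S] [Nonempty S]
    (r : S → ℝ) (P : S → S → ℝ) (c : ℝ) (hc0 : 0 ≤ c) (hc1 : c < 1)
    (hP : ∀ s, (∀ s', 0 ≤ P s s') ∧ ∑ s', P s s' = 1)
    (d₁ d₂ : S → S → ℝ)
    (hd₁self : ∀ x, d₁ x x = 0) (hd₁symm : ∀ x y, d₁ x y = d₁ y x)
    (hd₁tri : ∀ x y z, d₁ x z ≤ d₁ x y + d₁ y z)
    (hd₂self : ∀ x, d₂ x x = 0) (hd₂symm : ∀ x y, d₂ x y = d₂ y x)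
    (hd₂tri : ∀ x y z, d₂ x z ≤ d₂ x y + d₂ y z)
    (F : (S → S → ℝ) → S → S → ℝ)
    (hF : ∀ d si sj, F d si sj = (1 - c) * |r si - r sj| + c * W1 d (P si) (P sj)) :
    ∀ si sj, |F d₁ si sj - F d₂ si sj| ≤ c * ⨆ p : S × S, |d₁ p.1 p.2 - d₂ p.1 p.2| := by
  intro si sj
  set K := ⨆ p : S × S, |d₁ p.1 p.2 - d₂ p.1 p.2| with hKdef
  have hbK : BddAbove (Set.range fun p : S × S => |d₁ p.1 p.2 - d₂ p.1 p.2|) :=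
    Set.Finite.bddAbove (Set.finite_range _)
  have hK : ∀ x y, |d₁ x y - d₂ x y| ≤ K := fun x y =>
    le_ciSup hbK (⟨x, y⟩ : S × S)
  have hd₁0 : ∀ x y, 0 ≤ d₁ x y := fun x y => by
    have := hd₁tri x y x; rw [hd₁self, hd₁symm y x] at this; linarith
  have hd₂0 : ∀ x y, 0 ≤ d₂ x y := fun x y => by
    have := hd₂tri x y x; rw [hd₂self, hd₂symm y x] at this; linarith
  have hW : |W1 d₁ (P si) (P sj) - W1 d₂ (P si) (P sj)| ≤ K := by
    rw [abs_le]
    constructor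
    · have := W1_le_W1_add d₂ d₁ (P si) (P sj) (hP si).1 (hP si).2 (hP sj).1 (hP sj).2
        hd₂0 K (fun x y => by have := hK x y; rw [abs_le] at this; linarith)
      linarith
    · have := W1_le_W1_add d₁ d₂ (P si) (P sj) (hP si).1 (hP si).2 (hP sj).1 (hP sj).2
        hd₁0 K (fun x y => (abs_le.mp (hK x y)).2)
      linarith
  rw [hF, hF]
  have heq : (1 - c) * |r si - r sj| + c * W1 d₁ (P si) (P sj) -
      ((1 - c) * |r si - r sj| + c * W1 d₂ (P si) (P sj)) =
      c * (W1 d₁ (P si) (P sj) - W1 d₂ (P si) (P sj)) := by ring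
  rw [heq, abs_mul, abs_of_nonneg hc0]
  exact mul_le_mul_of_nonneg_left hW hc0
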